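/- Let D be a positive integer and let m_1, m_2, m_3 be positive integers with m_1+m_2+m_3 = 2D and max(m_1,m_2,m_3) ≤ D. Then in the symmetric group S_{D+1} on {1,…,D+1}, the cycles σ_1 = (1,2,…,m_1+1) and σ_2 = (1, m_1+1, m_1, …, m_1+m_3−D+2, m_1+2, m_1+3, …, D+1) are cycles of lengths m_1+1 and m_2+1 respectively, their product σ_1σ_2 (applying σ_2 first) is a cycle of length m_3+1, and the subgroup generated by σ_1, σ_2 and (σ_1σ_2)^{-1} acts transitively on {1,…,D+1}. -/

import Mathlib

open Fin.NatCast

private lemma fin_cast_inj {D a b : ℕ} (ha : a ≤ D) (hb : b ≤ D) :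
    ((a : ℕ) : Fin (D+1)) = ((b : ℕ) : Fin (D+1)) ↔ a = b := by
  constructor
  · intro h
    have h2 := congrArg Fin.val h
    rwa [Fin.val_cast_of_lt (by omega), Fin.val_cast_of_lt (by omega)] at h2
  · rintro rfl; rfl

/-- The list `[g 0, g 1, …, g (n-1)]` as elements of `Fin (D+1)`. -/
private def pl (D n : ℕ) (g : ℕ → ℕ) : List (Fin (D+1)) :=
  (List.range n).map (fun i => ((g i : ℕ) : Fin (D+1)))

private lemma pl_length {D n : ℕ} {g : ℕ → ℕ} : (pl D n g).length = n := by simp [pl]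

private lemma pl_getElem {D n : ℕ} {g : ℕ → ℕ} {i : ℕ} (hi : i < n) :
    (pl D n g)[i]'(by simp [pl, hi]) = ((g i : ℕ) : Fin (D+1)) := by
  simp [pl]

private lemma pl_nodup {D n : ℕ} {g : ℕ → ℕ} (hg : ∀ i < n, g i ≤ D)
    (hinj : ∀ i < n, ∀ j < n, g i = g j → i = j) : (pl D n g).Nodup := by
  refine List.Nodup.map_on ?_ List.nodup_range
  intro i hi j hj hij
  rw [List.mem_range] at hi hj
  exact hinj i hi j hj ((fin_cast_inj (hg i hi) (hg j hj)).mp hij)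

private lemma eval_step {D n : ℕ} {g : ℕ → ℕ} (hg : ∀ i < n, g i ≤ D)
    (hinj : ∀ i < n, ∀ j < n, g i = g j → i = j) {i k k' : ℕ} (hi : i < n)
    (hk : g i = k) (hk' : g ((i+1) % n) = k') :
    (pl D n g).formPerm ((k : ℕ) : Fin (D+1)) = ((k' : ℕ) : Fin (D+1)) := by
  subst hk hk'
  have h1 : ((g i : ℕ) : Fin (D+1)) = (pl D n g)[i]'(by simpa [pl_length] using hi) :=
    (pl_getElem hi).symm
  rw [h1, List.formPerm_apply_getElem _ (pl_nodup hg hinj)]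
  simp only [pl_length]
  exact pl_getElem (Nat.mod_lt _ (by omega))

private lemma eval_fix {D n : ℕ} {g : ℕ → ℕ} (hg : ∀ i < n, g i ≤ D)
    {k : ℕ} (hk : k ≤ D) (h : ∀ i < n, g i ≠ k) :
    (pl D n g).formPerm ((k : ℕ) : Fin (D+1)) = ((k : ℕ) : Fin (D+1)) := by
  apply List.formPerm_apply_of_notMem
  simp only [pl, List.mem_map, List.mem_range, not_exists, not_and]
  intro i hi hcast
  exact h i hi ((fin_cast_inj (hg i hi) hk).mp hcast)

private lemma eval_pow {D n : ℕ} {g : ℕ → ℕ} (hg : ∀ i < n, g i ≤ D)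
    (hinj : ∀ i < n, ∀ j < n, g i = g j → i = j) {t : ℕ} (ht : t < n) :
    ((pl D n g).formPerm ^ t) ((g 0 : ℕ) : Fin (D+1)) = ((g t : ℕ) : Fin (D+1)) := by
  have h0 : (0:ℕ) < n := by omega
  have h1 : ((g 0 : ℕ) : Fin (D+1)) = (pl D n g)[0]'(by simpa [pl_length] using h0) :=
    (pl_getElem h0).symm
  rw [h1, List.formPerm_pow_apply_getElem _ (pl_nodup hg hinj)]
  simp only [pl_length, Nat.zero_add, Nat.mod_eq_of_lt ht]
  exact pl_getElem ht

private lemma pl_isCycle {D n : ℕ} {g : ℕ → ℕ} (hg : ∀ i < n, g i ≤ D)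
    (hinj : ∀ i < n, ∀ j < n, g i = g j → i = j) (h2 : 2 ≤ n) :
    (pl D n g).formPerm.IsCycle :=
  List.isCycle_formPerm (pl_nodup hg hinj) (by rw [pl_length]; omega)

private lemma pl_card {D n : ℕ} {g : ℕ → ℕ} (hg : ∀ i < n, g i ≤ D)
    (hinj : ∀ i < n, ∀ j < n, g i = g j → i = j) (h2 : 2 ≤ n) :
    (pl D n g).formPerm.support.card = n := by
  rw [List.support_formPerm_of_nodup _ (pl_nodup hg hinj)
    (fun x hx => by have := congrArg List.length hx; simp [pl_length] at this; omega),
    List.toFinset_card_of_nodup (pl_nodup hg hinj), pl_length]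

private def g1 : ℕ → ℕ := fun i => i

private def g2 (D m₁ m₂ : ℕ) (i : ℕ) : ℕ :=
  if i = 0 then 0 else if i ≤ m₁ + m₂ - D then m₁ + 1 - i else i + D - m₂

private def g3a (D m₁ m₃ : ℕ) (i : ℕ) : ℕ :=
  if i ≤ m₁ + m₃ - D then i + 1 else i + D - m₃

private def g3b (m₁ : ℕ) (i : ℕ) : ℕ :=
  if i < m₁ then i + 1 else if i = m₁ then 0 else i

/-- The explicit construction in Case 2 (`l = 3`) of the proof of Proposition 2.11.
Points of `{1, …, D+1}` are encoded as `Fin (D+1)`, the point `j` corresponding to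
`((j - 1 : ℕ) : Fin (D+1))`; a cycle `(x₁, …, x_k)` is `List.formPerm` of the list
`[x₁, …, x_k]`. -/
theorem explicit_three_cycles (D m₁ m₂ m₃ : ℕ) (hD : 0 < D)
    (hm₁ : 0 < m₁) (hm₂ : 0 < m₂) (hm₃ : 0 < m₃)
    (hsum : m₁ + m₂ + m₃ = 2 * D)
    (h₁ : m₁ ≤ D) (h₂ : m₂ ≤ D) (h₃ : m₃ ≤ D)
    (σ₁ σ₂ : Equiv.Perm (Fin (D + 1)))
    -- `σ₁ = (1, 2, …, m₁+1)`
    (hσ₁ : σ₁ = ((List.range' 1 (m₁ + 1)).map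
      (fun j : ℕ => ((j - 1 : ℕ) : Fin (D + 1)))).formPerm)
    -- `σ₂ = (1, m₁+1, m₁, …, m₁+m₃-D+2, m₁+2, m₁+3, …, D+1)`
    (hσ₂ : σ₂ = ((1 :: ((List.range' (m₁ + m₃ - D + 2) (m₁ + m₂ - D)).reverse ++
        List.range' (m₁ + 2) (D - m₁))).map
      (fun j : ℕ => ((j - 1 : ℕ) : Fin (D + 1)))).formPerm) :
    σ₁.IsCycle ∧ σ₁.support.card = m₁ + 1 ∧
    σ₂.IsCycle ∧ σ₂.support.card = m₂ + 1 ∧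
    (σ₁ * σ₂).IsCycle ∧ (σ₁ * σ₂).support.card = m₃ + 1 ∧
    (∀ x y : Fin (D + 1),
      ∃ g ∈ Subgroup.closure {σ₁, σ₂, (σ₁ * σ₂)⁻¹}, g x = y) := by
  -- canonical forms of the two lists
  have hL1 : σ₁ = (pl D (m₁+1) g1).formPerm := by
    rw [hσ₁]; congr 1
    rw [List.range'_eq_map_range, List.map_map]
    unfold pl
    apply List.map_congr_left
    intro i _
    simp [g1]
  have hL2 : σ₂ = (pl D (m₂+1) (g2 D m₁ m₂)).formPerm := by
    rw [hσ₂]; congr 1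
    apply List.ext_getElem
    · simp [pl]; omega
    intro i ha hb'
    rcases i with _ | i
    · simp [pl, g2]
    · have hb : i < (m₁ + m₂ - D) + (D - m₁) := by simp [pl] at hb'; omega
      simp only [List.getElem_map, List.getElem_cons_succ, pl, List.getElem_range]
      rw [List.getElem_append]
      by_cases hib : i < (List.range' (m₁ + m₃ - D + 2) (m₁ + m₂ - D)).reverse.length
      · rw [dif_pos hib]
        rw [List.getElem_reverse, List.getElem_range']
        simp only [List.length_range', List.length_reverse] at hib ⊢
        congr 1
        simp only [g2]
        split_ifs <;> first | exact ‹False›.elim | omega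
      · rw [dif_neg hib]
        rw [List.getElem_range']
        simp only [List.length_range', List.length_reverse] at hib ⊢
        congr 1
        simp only [g2]
        split_ifs <;> first | exact ‹False›.elim | omega
  have hg1 : ∀ i < m₁ + 1, g1 i ≤ D := by intro i hi; simp only [g1]; omega
  have hinj1 : ∀ i < m₁ + 1, ∀ j < m₁ + 1, g1 i = g1 j → i = j := by
    intro i _ j _ h; simpa [g1] using h
  have hg2 : ∀ i < m₂ + 1, g2 D m₁ m₂ i ≤ D := by
    intro i hi; simp only [g2]; split_ifs <;> first | exact ‹False›.elim | omega
  have hinj2 : ∀ i < m₂ + 1, ∀ j < m₂ + 1, g2 D m₁ m₂ i = g2 D m₁ m₂ j → i = j := by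
    intro i hi j hj h; simp only [g2] at h
    split_ifs at h <;> omega
  have c1 : σ₁.IsCycle := by rw [hL1]; exact pl_isCycle hg1 hinj1 (by omega)
  have k1 : σ₁.support.card = m₁ + 1 := by rw [hL1]; exact pl_card hg1 hinj1 (by omega)
  have c2 : σ₂.IsCycle := by rw [hL2]; exact pl_isCycle hg2 hinj2 (by omega)
  have k2 : σ₂.support.card = m₂ + 1 := by rw [hL2]; exact pl_card hg2 hinj2 (by omega)
  -- transitivity
  have htrans : ∀ x y : Fin (D + 1),
      ∃ g ∈ Subgroup.closure {σ₁, σ₂, (σ₁ * σ₂)⁻¹}, g x = y := by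
    have horb : ∀ y : Fin (D+1),
        ∃ g ∈ Subgroup.closure {σ₁, σ₂, (σ₁ * σ₂)⁻¹}, g (((0:ℕ)) : Fin (D+1)) = y := by
      intro y
      have hmem1 : σ₁ ∈ Subgroup.closure {σ₁, σ₂, (σ₁ * σ₂)⁻¹} :=
        Subgroup.subset_closure (by simp)
      have hmem2 : σ₂ ∈ Subgroup.closure {σ₁, σ₂, (σ₁ * σ₂)⁻¹} :=
        Subgroup.subset_closure (by simp)
      have hy : y = ((y.val : ℕ) : Fin (D+1)) := (Fin.cast_val_eq_self y).symm
      by_cases hvm : y.val ≤ m₁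
      · refine ⟨σ₁ ^ y.val, pow_mem hmem1 _, ?_⟩
        conv_rhs => rw [hy]
        rw [hL1]
        exact eval_pow hg1 hinj1 (t := y.val) (by omega)
      · refine ⟨σ₂ ^ (y.val + m₂ - D), pow_mem hmem2 _, ?_⟩
        conv_rhs => rw [hy]
        have hvD : y.val ≤ D := by omega
        have e0 : g2 D m₁ m₂ 0 = 0 := by simp [g2]
        have et : g2 D m₁ m₂ (y.val + m₂ - D) = y.val := by
          simp only [g2]; split_ifs <;> first | exact ‹False›.elim | omega
        rw [hL2]
        have hp := eval_pow hg2 hinj2 (g := g2 D m₁ m₂) (t := y.val + m₂ - D) (by omega)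
        rw [e0, et] at hp
        exact hp
    intro x y
    obtain ⟨gx, hgx, hgx0⟩ := horb x
    obtain ⟨gy, hgy, hgy0⟩ := horb y
    refine ⟨gy * gx⁻¹, mul_mem hgy (inv_mem hgx), ?_⟩
    have hinvx : gx⁻¹ x = (((0:ℕ)) : Fin (D+1)) := by
      rw [← hgx0]; simp
    rw [Equiv.Perm.mul_apply, hinvx, hgy0]
  rcases lt_or_eq_of_le h₃ with h3l | h3e
  · -- case m₃ < D
    have hg3 : ∀ i < m₃ + 1, g3a D m₁ m₃ i ≤ D := by
      intro i hi; simp only [g3a]; split_ifs <;> first | exact ‹False›.elim | omega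
    have hinj3 : ∀ i < m₃ + 1, ∀ j < m₃ + 1, g3a D m₁ m₃ i = g3a D m₁ m₃ j → i = j := by
      intro i hi j hj h; simp only [g3a] at h
      split_ifs at h <;> omega
    have key : ∀ k : ℕ, k < D + 1 →
        (pl D (m₁+1) g1).formPerm ((pl D (m₂+1) (g2 D m₁ m₂)).formPerm ((k : ℕ) : Fin (D+1)))
          = (pl D (m₃+1) (g3a D m₁ m₃)).formPerm ((k : ℕ) : Fin (D+1)) := by
      intro k hklt
      have hkD : k ≤ D := by omega
      by_cases hk0 : k = 0
      · subst hk0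
        rw [eval_step hg2 hinj2 (i := 0) (k := 0) (k' := m₁) (by omega) (by simp [g2])
            (by rw [Nat.mod_eq_of_lt (by omega)]; simp only [g2]; split_ifs <;> first | exact ‹False›.elim | omega),
          eval_step hg1 hinj1 (i := m₁) (k := m₁) (k' := 0) (by omega) rfl
            (by rw [Nat.mod_self]; rfl),
          eval_fix hg3 (k := 0) (by omega)
            (by intro i hi; simp only [g3a]; split_ifs <;> first | exact ‹False›.elim | omega)]
      · by_cases hkc : k ≤ m₁ + m₃ - D
        · -- region 1 ≤ k ≤ c
          rw [eval_fix hg2 (k := k) hkD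
              (by intro i hi; simp only [g2]; split_ifs <;> first | exact ‹False›.elim | omega),
            eval_step hg1 hinj1 (i := k) (k := k) (k' := k + 1) (by omega) rfl
              (by rw [Nat.mod_eq_of_lt (by omega)]; rfl),
            eval_step hg3 hinj3 (i := k - 1) (k := k) (k' := k + 1) (by omega)
              (by simp only [g3a]; split_ifs <;> first | exact ‹False›.elim | omega)
              (by rw [Nat.mod_eq_of_lt (by omega)]; simp only [g3a]; split_ifs <;> first | exact ‹False›.elim | omega)]
        · by_cases hkm : k ≤ m₁
          · by_cases hkc1 : k = m₁ + m₃ - D + 1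
            · -- region k = c + 1
              by_cases hm1D : m₁ = D
              · rw [eval_step hg2 hinj2 (i := m₁ + 1 - k) (k := k) (k' := 0) (by omega)
                    (by simp only [g2]; split_ifs <;> first | exact ‹False›.elim | omega)
                    (by rw [show m₁ + 1 - k + 1 = m₂ + 1 by omega, Nat.mod_self]; simp [g2]),
                  eval_step hg1 hinj1 (i := 0) (k := 0) (k' := 1) (by omega) rfl
                    (by rw [Nat.mod_eq_of_lt (by omega)]; rfl),
                  eval_step hg3 hinj3 (i := m₃) (k := k) (k' := 1) (by omega)
                    (by simp only [g3a]; split_ifs <;> first | exact ‹False›.elim | omega)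
                    (by rw [Nat.mod_self]; simp only [g3a]; split_ifs <;> first | exact ‹False›.elim | omega)]
              · rw [eval_step hg2 hinj2 (i := m₁ + 1 - k) (k := k) (k' := m₁ + 1) (by omega)
                    (by simp only [g2]; split_ifs <;> first | exact ‹False›.elim | omega)
                    (by rw [Nat.mod_eq_of_lt (by omega)]; simp only [g2]; split_ifs <;> first | exact ‹False›.elim | omega),
                  eval_fix hg1 (k := m₁ + 1) (by omega)
                    (by intro i hi; simp only [g1]; omega),
                  eval_step hg3 hinj3 (i := m₁ + m₃ - D) (k := k) (k' := m₁ + 1) (by omega)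
                    (by simp only [g3a]; split_ifs <;> first | exact ‹False›.elim | omega)
                    (by rw [Nat.mod_eq_of_lt (by omega)]; simp only [g3a]; split_ifs <;> first | exact ‹False›.elim | omega)]
            · -- region c + 2 ≤ k ≤ m₁
              rw [eval_step hg2 hinj2 (i := m₁ + 1 - k) (k := k) (k' := k - 1) (by omega)
                  (by simp only [g2]; split_ifs <;> first | exact ‹False›.elim | omega)
                  (by rw [Nat.mod_eq_of_lt (by omega)]; simp only [g2]; split_ifs <;> first | exact ‹False›.elim | omega),
                eval_step hg1 hinj1 (i := k - 1) (k := k - 1) (k' := k) (by omega)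
                  (by simp only [g1])
                  (by rw [Nat.mod_eq_of_lt (by omega)]; simp only [g1]; omega),
                eval_fix hg3 (k := k) hkD
                  (by intro i hi; simp only [g3a]; split_ifs <;> first | exact ‹False›.elim | omega)]
          · by_cases hkD' : k = D
            · -- region k = D (here m₁ < D)
              rw [eval_step hg2 hinj2 (i := m₂) (k := k) (k' := 0) (by omega)
                  (by simp only [g2]; split_ifs <;> first | exact ‹False›.elim | omega)
                  (by rw [Nat.mod_self]; simp [g2]),
                eval_step hg1 hinj1 (i := 0) (k := 0) (k' := 1) (by omega) rfl
                  (by rw [Nat.mod_eq_of_lt (by omega)]; rfl),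
                eval_step hg3 hinj3 (i := m₃) (k := k) (k' := 1) (by omega)
                  (by simp only [g3a]; split_ifs <;> first | exact ‹False›.elim | omega)
                  (by rw [Nat.mod_self]; simp only [g3a]; split_ifs <;> first | exact ‹False›.elim | omega)]
            · -- region m₁ + 1 ≤ k ≤ D - 1
              rw [eval_step hg2 hinj2 (i := k + m₂ - D) (k := k) (k' := k + 1) (by omega)
                  (by simp only [g2]; split_ifs <;> first | exact ‹False›.elim | omega)
                  (by rw [Nat.mod_eq_of_lt (by omega)]; simp only [g2]; split_ifs <;> first | exact ‹False›.elim | omega),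
                eval_fix hg1 (k := k + 1) (by omega)
                  (by intro i hi; simp only [g1]; omega),
                eval_step hg3 hinj3 (i := k + m₃ - D) (k := k) (k' := k + 1) (by omega)
                  (by simp only [g3a]; split_ifs <;> first | exact ‹False›.elim | omega)
                  (by rw [Nat.mod_eq_of_lt (by omega)]; simp only [g3a]; split_ifs <;> first | exact ‹False›.elim | omega)]
    have hprod : σ₁ * σ₂ = (pl D (m₃+1) (g3a D m₁ m₃)).formPerm := by
      ext x
      have hx : x = ((x.val : ℕ) : Fin (D+1)) := (Fin.cast_val_eq_self x).symm
      rw [hL1, hL2, Equiv.Perm.mul_apply]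
      conv_lhs => rw [hx]
      conv_rhs => rw [hx]
      exact congrArg Fin.val (key x.val x.isLt)
    refine ⟨c1, k1, c2, k2, ?_, ?_, htrans⟩
    · rw [hprod]; exact pl_isCycle hg3 hinj3 (by omega)
    · rw [hprod]; exact pl_card hg3 hinj3 (by omega)
  · -- case m₃ = D
    subst h3e
    have hg3 : ∀ i < m₃ + 1, g3b m₁ i ≤ m₃ := by
      intro i hi; simp only [g3b]; split_ifs <;> first | exact ‹False›.elim | omega
    have hinj3 : ∀ i < m₃ + 1, ∀ j < m₃ + 1, g3b m₁ i = g3b m₁ j → i = j := by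
      intro i hi j hj h; simp only [g3b] at h
      split_ifs at h <;> omega
    have key : ∀ k : ℕ, k < m₃ + 1 →
        (pl m₃ (m₁+1) g1).formPerm ((pl m₃ (m₂+1) (g2 m₃ m₁ m₂)).formPerm ((k : ℕ) : Fin (m₃+1)))
          = (pl m₃ (m₃+1) (g3b m₁)).formPerm ((k : ℕ) : Fin (m₃+1)) := by
      intro k hklt
      have hkD : k ≤ m₃ := by omega
      by_cases hk0 : k = 0
      · subst hk0
        rw [eval_step hg2 hinj2 (i := 0) (k := 0) (k' := m₁ + 1) (by omega) (by simp [g2])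
            (by rw [Nat.mod_eq_of_lt (by omega)]; simp only [g2]; split_ifs <;> first | exact ‹False›.elim | omega),
          eval_fix hg1 (k := m₁ + 1) (by omega)
            (by intro i hi; simp only [g1]; omega),
          eval_step hg3 hinj3 (i := m₁) (k := 0) (k' := m₁ + 1) (by omega)
            (by simp only [g3b]; split_ifs <;> first | exact ‹False›.elim | omega)
            (by rw [Nat.mod_eq_of_lt (by omega)]; simp only [g3b]; split_ifs <;> first | exact ‹False›.elim | omega)]
      · by_cases hkm' : k ≤ m₁ - 1
        · -- region 1 ≤ k ≤ m₁ - 1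
          rw [eval_fix hg2 (k := k) hkD
              (by intro i hi; simp only [g2]; split_ifs <;> first | exact ‹False›.elim | omega),
            eval_step hg1 hinj1 (i := k) (k := k) (k' := k + 1) (by omega) rfl
              (by rw [Nat.mod_eq_of_lt (by omega)]; rfl),
            eval_step hg3 hinj3 (i := k - 1) (k := k) (k' := k + 1) (by omega)
              (by simp only [g3b]; split_ifs <;> first | exact ‹False›.elim | omega)
              (by rw [Nat.mod_eq_of_lt (by omega)]; simp only [g3b]; split_ifs <;> first | exact ‹False›.elim | omega)]
        · by_cases hkm : k = m₁
          · -- region k = m₁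
            rw [eval_fix hg2 (k := k) hkD
                (by intro i hi; simp only [g2]; split_ifs <;> first | exact ‹False›.elim | omega),
              eval_step hg1 hinj1 (i := m₁) (k := k) (k' := 0) (by omega)
                (by simp only [g1]; omega)
                (by rw [Nat.mod_self]; rfl),
              eval_step hg3 hinj3 (i := m₁ - 1) (k := k) (k' := 0) (by omega)
                (by simp only [g3b]; split_ifs <;> first | exact ‹False›.elim | omega)
                (by rw [Nat.mod_eq_of_lt (by omega)]; simp only [g3b]; split_ifs <;> first | exact ‹False›.elim | omega)]
          · by_cases hkD' : k = m₃
            · -- region k = D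
              rw [eval_step hg2 hinj2 (i := m₂) (k := k) (k' := 0) (by omega)
                  (by simp only [g2]; split_ifs <;> first | exact ‹False›.elim | omega)
                  (by rw [Nat.mod_self]; simp [g2]),
                eval_step hg1 hinj1 (i := 0) (k := 0) (k' := 1) (by omega) rfl
                  (by rw [Nat.mod_eq_of_lt (by omega)]; rfl),
                eval_step hg3 hinj3 (i := m₃) (k := k) (k' := 1) (by omega)
                  (by simp only [g3b]; split_ifs <;> first | exact ‹False›.elim | omega)
                  (by rw [Nat.mod_self]; simp only [g3b]; split_ifs <;> first | exact ‹False›.elim | omega)]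
            · -- region m₁ + 1 ≤ k ≤ D - 1
              rw [eval_step hg2 hinj2 (i := k + m₂ - m₃) (k := k) (k' := k + 1) (by omega)
                  (by simp only [g2]; split_ifs <;> first | exact ‹False›.elim | omega)
                  (by rw [Nat.mod_eq_of_lt (by omega)]; simp only [g2]; split_ifs <;> first | exact ‹False›.elim | omega),
                eval_fix hg1 (k := k + 1) (by omega)
                  (by intro i hi; simp only [g1]; omega),
                eval_step hg3 hinj3 (i := k) (k := k) (k' := k + 1) (by omega)
                  (by simp only [g3b]; split_ifs <;> first | exact ‹False›.elim | omega)
                  (by rw [Nat.mod_eq_of_lt (by omega)]; simp only [g3b]; split_ifs <;> first | exact ‹False›.elim | omega)]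
    have hprod : σ₁ * σ₂ = (pl m₃ (m₃+1) (g3b m₁)).formPerm := by
      ext x
      have hx : x = ((x.val : ℕ) : Fin (m₃+1)) := (Fin.cast_val_eq_self x).symm
      rw [hL1, hL2, Equiv.Perm.mul_apply]
      conv_lhs => rw [hx]
      conv_rhs => rw [hx]
      exact congrArg Fin.val (key x.val x.isLt)
    refine ⟨c1, k1, c2, k2, ?_, ?_, htrans⟩
    · rw [hprod]; exact pl_isCycle hg3 hinj3 (by omega)
    · rw [hprod]; exact pl_card hg3 hinj3 (by omega)
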